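/- Let 0 < α ≤ 1 and let G be an antitree whose spheres around the root have sizes s₀ = 1 and s_n = ⌊n^α⌋ for n ≥ 1. Then the adjacency operator A_G is essentially self-adjoint on C_c(V); equivalently, η₊(A_G) = η₋(A_G) = 0. -/

import Mathlib

noncomputable section

open scoped ComplexConjugate

namespace DefIdx

/-- The Hilbert space `ℓ²(V)` of square-summable complex functions on `V`. -/
abbrev L2 (V : Type*) := lp (fun _ : V => ℂ) 2

lemma memℓp_of_finite {V : Type*} {f : V → ℂ} (h : {x | f x ≠ 0}.Finite) :
    Memℓp f 2 :=
  (memℓp_zero h).of_exponent_ge zero_le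

/-- The subspace `C_c(V)` of finitely supported elements of `ℓ²(V)`. -/
def Cc (V : Type*) : Submodule ℂ (L2 V) where
  carrier := {f | {x | (f : ∀ _ : V, ℂ) x ≠ 0}.Finite}
  zero_mem' := by
    simp only [Set.mem_setOf_eq, lp.coeFn_zero, Pi.zero_apply, ne_eq, not_true_eq_false]
    simp
  add_mem' := by
    intro f g hf hg
    refine (hf.union hg).subset ?_
    intro x hx
    simp only [Set.mem_setOf_eq, lp.coeFn_add, Pi.add_apply] at hx ⊢
    by_contra hc
    try push_neg at hc
    simp only [Set.mem_union, Set.mem_setOf_eq, not_or, not_not] at hc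
    simp [hc.1, hc.2] at hx
  smul_mem' := by
    intro c f hf
    refine hf.subset ?_
    intro x hx
    simp only [Set.mem_setOf_eq, lp.coeFn_smul, Pi.smul_apply, smul_eq_mul] at hx ⊢
    intro h0
    simp [h0] at hx

section Adjacency

variable {V : Type*}

/-- The pointwise action of the adjacency matrix of a locally finite graph. -/
def adjA (G : SimpleGraph V) (hG : G.LocallyFinite) (f : V → ℂ) (x : V) : ℂ :=
  ∑ y ∈ @SimpleGraph.neighborFinset V G x (hG x), f y

lemma adjA_support (G : SimpleGraph V) (hG : G.LocallyFinite) {f : V → ℂ}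
    (hf : {x | f x ≠ 0}.Finite) : {x | adjA G hG f x ≠ 0}.Finite := by
  have hsub : {x | adjA G hG f x ≠ 0} ⊆ ⋃ y ∈ {x | f x ≠ 0}, (G.neighborSet y) := by
    intro x hx
    obtain ⟨y, hy, hfy⟩ := Finset.exists_ne_zero_of_sum_ne_zero hx
    have hadj : G.Adj x y := by
      have := @SimpleGraph.mem_neighborFinset V G x (hG x) y
      exact this.mp hy
    exact Set.mem_biUnion hfy (SimpleGraph.mem_neighborSet G y x |>.mpr hadj.symm)
  exact (hf.biUnion fun y _ => by haveI := hG y; exact (G.neighborSet y).toFinite).subset hsub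

/-- The adjacency operator of a locally finite graph, as a densely defined operator
on `ℓ²(V)` with domain the finitely supported functions. -/
def adjOp (G : SimpleGraph V) (hG : G.LocallyFinite) : L2 V →ₗ.[ℂ] L2 V where
  domain := Cc V
  toFun :=
    { toFun := fun f => ⟨adjA G hG f, memℓp_of_finite (adjA_support G hG f.2)⟩
      map_add' := by
        intro f g
        apply lp.ext
        funext x
        simp only [lp.coeFn_add, Pi.add_apply]
        show adjA G hG (((f : L2 V) + (g : L2 V) : L2 V)) x = _
        simp only [adjA, lp.coeFn_add, Pi.add_apply]
        exact Finset.sum_add_distrib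
      map_smul' := by
        intro c f
        apply lp.ext
        funext x
        simp only [RingHom.id_apply, lp.coeFn_smul, Pi.smul_apply, smul_eq_mul]
        show adjA G hG ((c • (f : L2 V) : L2 V)) x = _
        simp only [adjA, lp.coeFn_smul, Pi.smul_apply, smul_eq_mul]
        exact (Finset.mul_sum _ _ _).symm }

/-- The pointwise action of the combinatorial (physical) Laplacian. -/
def lapA (G : SimpleGraph V) (hG : G.LocallyFinite) (f : V → ℂ) (x : V) : ℂ :=
  ∑ y ∈ @SimpleGraph.neighborFinset V G x (hG x), (f x - f y)

lemma lapA_support (G : SimpleGraph V) (hG : G.LocallyFinite) {f : V → ℂ}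
    (hf : {x | f x ≠ 0}.Finite) : {x | lapA G hG f x ≠ 0}.Finite := by
  have hsub : {x | lapA G hG f x ≠ 0} ⊆
      {x | f x ≠ 0} ∪ ⋃ y ∈ {x | f x ≠ 0}, (G.neighborSet y) := by
    intro x hx
    by_contra hc
    simp only [Set.mem_union, Set.mem_setOf_eq, not_or, not_not] at hc
    obtain ⟨hfx, hmem⟩ := hc
    apply hx
    show lapA G hG f x = 0
    unfold lapA
    refine Finset.sum_eq_zero fun y hy => ?_
    have hadj : G.Adj x y := (@SimpleGraph.mem_neighborFinset V G x (hG x) y).mp hy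
    have hfy : f y = 0 := by
      by_contra hfy
      exact hmem (Set.mem_biUnion hfy ((SimpleGraph.mem_neighborSet G y x).mpr hadj.symm))
    rw [hfx, hfy, sub_zero]
  refine Set.Finite.subset ?_ hsub
  exact hf.union (hf.biUnion fun y _ => by haveI := hG y; exact (G.neighborSet y).toFinite)

/-- The combinatorial (physical) Laplacian of a locally finite graph, as a densely
defined operator on `ℓ²(V)` with domain the finitely supported functions. -/
def lapOp (G : SimpleGraph V) (hG : G.LocallyFinite) : L2 V →ₗ.[ℂ] L2 V where
  domain := Cc V
  toFun :=
    { toFun := fun f => ⟨lapA G hG f, memℓp_of_finite (lapA_support G hG f.2)⟩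
      map_add' := by
        intro f g
        apply lp.ext
        funext x
        simp only [lp.coeFn_add, Pi.add_apply]
        show lapA G hG (((f : L2 V) + (g : L2 V) : L2 V)) x = _
        simp only [lapA, lp.coeFn_add, Pi.add_apply]
        rw [← Finset.sum_add_distrib]
        exact Finset.sum_congr rfl fun y _ => by ring
      map_smul' := by
        intro c f
        apply lp.ext
        funext x
        simp only [RingHom.id_apply, lp.coeFn_smul, Pi.smul_apply, smul_eq_mul]
        show lapA G hG ((c • (f : L2 V) : L2 V)) x = _
        simp only [lapA, lp.coeFn_smul, Pi.smul_apply, smul_eq_mul]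
        rw [Finset.mul_sum]
        exact Finset.sum_congr rfl fun y _ => by ring }

end Adjacency

section Jacobi

/-- The pointwise action of the Jacobi matrix with off-diagonal entries `a n` and
diagonal entries `b n` (with the convention `a (-1) = 0`). -/
def jacA (a b : ℕ → ℝ) (f : ℕ → ℂ) (n : ℕ) : ℂ :=
  (if n = 0 then 0 else (a (n - 1) : ℂ) * f (n - 1)) + (b n : ℂ) * f n + (a n : ℂ) * f (n + 1)

lemma jacA_support (a b : ℕ → ℝ) {f : ℕ → ℂ} (hf : {n | f n ≠ 0}.Finite) :
    {n | jacA a b f n ≠ 0}.Finite := by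
  have hsub : {n | jacA a b f n ≠ 0} ⊆
      (fun m => m + 1) '' {n | f n ≠ 0} ∪ {n | f n ≠ 0} ∪ (fun m => m - 1) '' {n | f n ≠ 0} := by
    intro n hn
    by_contra hc
    simp only [Set.mem_union, not_or] at hc
    apply hn
    show jacA a b f n = 0
    have h1 : f n = 0 := by
      by_contra h; exact hc.1.2 h
    have h3 : f (n + 1) = 0 := by
      by_contra h
      exact hc.2 ⟨n + 1, h, by show n + 1 - 1 = n; omega⟩
    rcases Nat.eq_zero_or_pos n with h0 | h0
    · subst h0; simp [jacA, h1, h3]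
    · have h2 : f (n - 1) = 0 := by
        by_contra h
        exact hc.1.1 ⟨n - 1, h, by show n - 1 + 1 = n; omega⟩
      simp [jacA, h1, h2, h3]
  refine Set.Finite.subset ?_ hsub
  exact ((hf.image _).union hf).union (hf.image _)

/-- The Jacobi matrix with off-diagonal entries `a n > 0` and diagonal entries `b n`,
as a densely defined operator on `ℓ²(ℕ)` with domain the finitely supported sequences. -/
def jacOp (a b : ℕ → ℝ) : L2 ℕ →ₗ.[ℂ] L2 ℕ where
  domain := Cc ℕ
  toFun :=
    { toFun := fun f => ⟨jacA a b f, memℓp_of_finite (jacA_support a b f.2)⟩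
      map_add' := by
        intro f g
        apply lp.ext
        funext n
        simp only [lp.coeFn_add, Pi.add_apply]
        show jacA a b (((f : L2 ℕ) + (g : L2 ℕ) : L2 ℕ)) n = _
        simp only [jacA, lp.coeFn_add, Pi.add_apply]
        split <;> ring
      map_smul' := by
        intro c f
        apply lp.ext
        funext n
        simp only [RingHom.id_apply, lp.coeFn_smul, Pi.smul_apply, smul_eq_mul]
        show jacA a b ((c • (f : L2 ℕ) : L2 ℕ)) n = _
        simp only [jacA, lp.coeFn_smul, Pi.smul_apply, smul_eq_mul]
        split <;> ring }

end Jacobi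

section Eta

variable {H : Type*} [NormedAddCommGroup H] [InnerProductSpace ℂ H] [CompleteSpace H]

/-- The deficiency subspace `ker (T* - z)` of a (partially defined) operator. -/
def defSubspace (T : H →ₗ.[ℂ] H) (z : ℂ) : Submodule ℂ T.adjoint.domain :=
  LinearMap.ker (T.adjoint.toFun - z • T.adjoint.domain.subtype)

/-- The deficiency index `η₊(T) = dim ker (T* - i)`. -/
def etaP (T : H →ₗ.[ℂ] H) : Cardinal := Module.rank ℂ (defSubspace T Complex.I)

/-- The deficiency index `η₋(T) = dim ker (T* + i)`. -/
def etaM (T : H →ₗ.[ℂ] H) : Cardinal := Module.rank ℂ (defSubspace T (-Complex.I))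

/-- A partially defined operator is symmetric if `⟪T f, g⟫ = ⟪f, T g⟫` on its domain. -/
def IsSymm (T : H →ₗ.[ℂ] H) : Prop :=
  ∀ f g : T.domain, (inner ℂ (T f) (g : H) : ℂ) = inner ℂ (f : H) (T g)

/-- A densely defined operator is essentially self-adjoint if its closure is self-adjoint. -/
def EssSelfAdj (T : H →ₗ.[ℂ] H) : Prop :=
  T.closure.adjoint = T.closure

/-- The restriction of the sum of two partially defined operators to the domain
of the first one, assuming domain inclusion. -/
def sumRestrict (S T : H →ₗ.[ℂ] H) (h : S.domain ≤ T.domain) : H →ₗ.[ℂ] H :=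
  ⟨S.domain, S.toFun + T.toFun.comp (Submodule.inclusion h)⟩

/-- The sum of a partially defined operator and a bounded operator, with the
domain of the former. -/
def addBdd (S : H →ₗ.[ℂ] H) (B : H →L[ℂ] H) : H →ₗ.[ℂ] H :=
  ⟨S.domain, S.toFun + (B : H →ₗ[ℂ] H).comp S.domain.subtype⟩

end Eta

section Graphs

variable {V : Type*}

/-- The sphere of radius `n` around the vertex `v` (w.r.t. the graph metric). -/
def sphere (G : SimpleGraph V) (v : V) (n : ℕ) : Set V := {w | G.dist v w = n}

/-- A connected graph is an antitree with root `v` if every vertex `w ≠ v` at distance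
`n ≥ 1` from `v` has exactly `S_{n-1}(v) ∪ S_{n+1}(v)` as its set of neighbours. -/
def IsAntitree (G : SimpleGraph V) (v : V) : Prop :=
  G.Connected ∧ ∀ w, w ≠ v →
    G.neighborSet w = sphere G v (G.dist v w - 1) ∪ sphere G v (G.dist v w + 1)

/-- A function is radially symmetric (w.r.t. the root `v`) if it is constant on
each sphere around `v`. -/
def RadSymm (G : SimpleGraph V) (v : V) (f : V → ℂ) : Prop :=
  ∀ x y, G.dist v x = G.dist v y → f x = f y

/-- The average of `f` over the sphere of radius `n` around `v`. -/
def sphAvg (G : SimpleGraph V) (v : V) (hfin : ∀ n, (sphere G v n).Finite)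
    (f : V → ℂ) (n : ℕ) : ℂ :=
  (1 / ((sphere G v n).ncard : ℂ)) * ∑ y ∈ (hfin n).toFinset, f y

/-- The sphere-averaging map `P`. -/
def sphP (G : SimpleGraph V) (v : V) (hfin : ∀ n, (sphere G v n).Finite)
    (f : V → ℂ) (x : V) : ℂ :=
  sphAvg G v hfin f (G.dist v x)

/-- The disjoint union of `n` copies of a graph. -/
def copies (G : SimpleGraph V) (n : ℕ) : SimpleGraph (Fin n × V) where
  Adj p q := p.1 = q.1 ∧ G.Adj p.2 q.2
  symm := ⟨fun p q h => ⟨h.1.symm, h.2.symm⟩⟩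
  loopless := ⟨fun q h => G.loopless.irrefl q.2 h.2⟩

/-- The disjoint union of copies of a locally finite graph is locally finite. -/
def copiesLF (G : SimpleGraph V) (hG : G.LocallyFinite) (n : ℕ) :
    (copies G n).LocallyFinite := fun p =>
  Set.Finite.fintype (by
    haveI := hG p.2
    have hsub : (copies G n).neighborSet p ⊆ (fun w => (p.1, w)) '' (G.neighborSet p.2) := by
      rintro ⟨i, w⟩ ⟨h1, h2⟩
      exact ⟨w, h2, by simp [h1]⟩
    exact ((G.neighborSet p.2).toFinite.image _).subset hsub)

end Graphs


section VN

set_option linter.unusedSectionVars false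

local notation "⟪" x ", " y "⟫" => @inner ℂ _ _ x y


variable {H : Type*} [NormedAddCommGroup H] [InnerProductSpace ℂ H] [CompleteSpace H]

theorem adjoint_isClosed (T : H →ₗ.[ℂ] H) (hT : Dense (T.domain : Set H)) :
    T.adjoint.IsClosed := by
  have hgr : (T.adjoint.graph : Set (H × H)) =
      ⋂ x : T.domain, {p : H × H | ⟪p.2, (x : H)⟫ = ⟪p.1, T x⟫} := by
    ext ⟨y, z⟩
    simp only [SetLike.mem_coe, LinearPMap.mem_graph_iff, Set.mem_iInter, Set.mem_setOf_eq]
    constructor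
    · rintro ⟨⟨y', hy'⟩, rfl, rfl⟩ x
      exact (LinearPMap.adjoint_isFormalAdjoint hT ⟨y', hy'⟩ x)
    · intro h
      have hy : y ∈ T.adjoint.domain :=
        LinearPMap.mem_adjoint_domain_of_exists (T := T) y ⟨z, fun x => h x⟩
      exact ⟨⟨y, hy⟩, rfl, (LinearPMap.adjoint_apply_eq hT ⟨y, hy⟩ fun x => h x)⟩
  rw [LinearPMap.IsClosed, hgr]
  refine isClosed_iInter fun x => ?_
  have : Continuous fun p : H × H => ⟪p.2, (x : H)⟫ - ⟪p.1, T x⟫ := by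
    exact ((continuous_snd.inner continuous_const)).sub (continuous_fst.inner continuous_const)
  have := isClosed_singleton (x := (0 : ℂ)) |>.preimage this
  convert this using 1
  ext p
  simp [sub_eq_zero]

variable {T : H →ₗ.[ℂ] H}

theorem closure_dense_domain (hd : Dense (T.domain : Set H)) :
    Dense (T.closure.domain : Set H) :=
  hd.mono (fun _ hx => T.le_closure.1 hx)

theorem closure_adjoint_eq (hd : Dense (T.domain : Set H)) (hcl : T.IsClosable) :
    T.closure.adjoint = T.adjoint := by
  have hd' : Dense (T.closure.domain : Set H) := closure_dense_domain hd
  apply le_antisymm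
  · have key : ∀ y : T.closure.adjoint.domain, ∀ x : T.domain,
        ⟪(T.closure.adjoint y : H), (x : H)⟫ = ⟪(y : H), T x⟫ := by
      intro y x
      have hx' : (x : H) ∈ T.closure.domain := T.le_closure.1 x.2
      have hval : T.closure ⟨(x : H), hx'⟩ = T x := (T.le_closure.2 rfl).symm
      have := LinearPMap.adjoint_isFormalAdjoint hd' y ⟨(x : H), hx'⟩
      rw [hval] at this
      exact this
    refine ⟨fun y hy => ?_, fun y y' hyy' => ?_⟩
    · exact LinearPMap.mem_adjoint_domain_of_exists (T := T) y
        ⟨T.closure.adjoint ⟨y, hy⟩, fun x => key ⟨y, hy⟩ x⟩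
    · exact (LinearPMap.adjoint_apply_eq hd y' (fun x => by
        rw [← hyy']; exact key y x)).symm
  · have key : ∀ y : T.adjoint.domain, ∀ x : T.closure.domain,
        ⟪(T.adjoint y : H), (x : H)⟫ = ⟪(y : H), T.closure x⟫ := by
      intro y x
      set s : Set (H × H) := {p : H × H | ⟪(T.adjoint y : H), p.1⟫ = ⟪(y : H), p.2⟫} with hs
      have hsc : IsClosed s := by
        have hcont : Continuous fun p : H × H =>
            ⟪(T.adjoint y : H), p.1⟫ - ⟪(y : H), p.2⟫ :=
          ((continuous_const.inner continuous_fst)).sub (continuous_const.inner continuous_snd)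
        have := (isClosed_singleton (x := (0 : ℂ))).preimage hcont
        convert this using 1
        ext p
        simp [hs, sub_eq_zero]
      have hsub : (T.graph : Set (H × H)) ⊆ s := by
        rintro ⟨a, b⟩ hab
        rw [SetLike.mem_coe, LinearPMap.mem_graph_iff] at hab
        obtain ⟨u, hu1, hu2⟩ := hab
        have hu1' : (u : H) = a := hu1
        have hu2' : (T u : H) = b := hu2
        show ⟪(T.adjoint y : H), a⟫ = ⟪(y : H), b⟫
        rw [← hu1', ← hu2']
        exact LinearPMap.adjoint_isFormalAdjoint hd y u
      have hmem : ((x : H), T.closure x) ∈ T.closure.graph := T.closure.mem_graph x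
      rw [← hcl.graph_closure_eq_closure_graph] at hmem
      have : ((x : H), T.closure x) ∈ closure (T.graph : Set (H × H)) := hmem
      exact closure_minimal hsub hsc this
    refine ⟨fun y hy => ?_, fun y y' hyy' => ?_⟩
    · exact LinearPMap.mem_adjoint_domain_of_exists (T := T.closure) y
        ⟨T.adjoint ⟨y, hy⟩, fun x => key ⟨y, hy⟩ x⟩
    · exact (LinearPMap.adjoint_apply_eq hd' y' (fun x => by
        rw [← hyy']; exact key y x)).symm

theorem closure_symm (hcl : T.IsClosable) (hsymm : T.IsFormalAdjoint T) :
    ∀ x y : T.closure.domain, ⟪(T.closure x : H), (y : H)⟫ = ⟪(x : H), T.closure y⟫ := by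
  have hclosure_mem : ∀ x : T.closure.domain,
      ((x : H), T.closure x) ∈ closure (T.graph : Set (H × H)) := by
    intro x
    have hmem : ((x : H), T.closure x) ∈ T.closure.graph := T.closure.mem_graph x
    rw [← hcl.graph_closure_eq_closure_graph] at hmem
    exact hmem
  have step1 : ∀ p ∈ closure (T.graph : Set (H × H)), ∀ u : T.domain,
      ⟪p.2, (u : H)⟫ = ⟪p.1, T u⟫ := by
    intro p hp u
    have hsc : IsClosed {q : H × H | ⟪q.2, (u : H)⟫ = ⟪q.1, T u⟫} := by
      have hcont : Continuous fun q : H × H => ⟪q.2, (u : H)⟫ - ⟪q.1, T u⟫ :=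
        (continuous_snd.inner continuous_const).sub (continuous_fst.inner continuous_const)
      have := (isClosed_singleton (x := (0 : ℂ))).preimage hcont
      convert this using 1
      ext q
      simp [sub_eq_zero]
    have hsub : (T.graph : Set (H × H)) ⊆ {q : H × H | ⟪q.2, (u : H)⟫ = ⟪q.1, T u⟫} := by
      rintro ⟨a, b⟩ hab
      rw [SetLike.mem_coe, LinearPMap.mem_graph_iff] at hab
      obtain ⟨w, hw1, hw2⟩ := hab
      have hw1' : (w : H) = a := hw1
      have hw2' : (T w : H) = b := hw2
      show ⟪b, (u : H)⟫ = ⟪a, T u⟫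
      rw [← hw1', ← hw2']
      exact hsymm w u
    exact closure_minimal hsub hsc hp
  intro x y
  -- second limit
  have hp := hclosure_mem x
  have hsc : IsClosed {q : H × H | ⟪(T.closure x : H), q.1⟫ = ⟪(x : H), q.2⟫} := by
    have hcont : Continuous fun q : H × H => ⟪(T.closure x : H), q.1⟫ - ⟪(x : H), q.2⟫ :=
      (continuous_const.inner continuous_fst).sub (continuous_const.inner continuous_snd)
    have := (isClosed_singleton (x := (0 : ℂ))).preimage hcont
    convert this using 1
    ext q
    simp [sub_eq_zero]
  have hsub : (T.graph : Set (H × H)) ⊆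
      {q : H × H | ⟪(T.closure x : H), q.1⟫ = ⟪(x : H), q.2⟫} := by
    rintro ⟨a, b⟩ hab
    rw [SetLike.mem_coe, LinearPMap.mem_graph_iff] at hab
    obtain ⟨w, hw1, hw2⟩ := hab
    have hw1' : (w : H) = a := hw1
    have hw2' : (T w : H) = b := hw2
    show ⟪(T.closure x : H), a⟫ = ⟪(x : H), b⟫
    rw [← hw1', ← hw2']
    exact step1 _ hp w
  exact closure_minimal hsub hsc (hclosure_mem y)

theorem norm_sq_add_smul (S : H →ₗ.[ℂ] H)
    (hsymm : ∀ x y : S.domain, ⟪(S x : H), (y : H)⟫ = ⟪(x : H), S y⟫)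
    (z : ℂ) (hz : z.re = 0) (hz1 : ‖z‖ = 1) (x : S.domain) :
    ‖(S x : H) + z • (x : H)‖ ^ 2 = ‖(S x : H)‖ ^ 2 + ‖(x : H)‖ ^ 2 := by
  have hre : (⟪(S x : H), (x : H)⟫).im = 0 := by
    have h1 : ⟪(S x : H), (x : H)⟫ = ⟪(x : H), (S x : H)⟫ := hsymm x x
    have h2 : ⟪(x : H), (S x : H)⟫ = conj ⟪(S x : H), (x : H)⟫ := (inner_conj_symm _ _).symm
    have h3 := congrArg Complex.im (h1.trans h2)
    simp only [Complex.conj_im] at h3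
    linarith
  have expand := norm_add_sq (𝕜 := ℂ) (S x : H) (z • (x : H))
  rw [inner_smul_right] at expand
  rw [norm_smul, hz1, one_mul] at expand
  rw [expand]
  have hzero : RCLike.re (z * ⟪(S x : H), (x : H)⟫) = 0 := by
    rw [RCLike.re_to_complex, Complex.mul_re, hre, hz]
    ring
  rw [hzero]
  ring

theorem range_closed (S : H →ₗ.[ℂ] H) (hSc : S.IsClosed)
    (hsymm : ∀ x y : S.domain, ⟪(S x : H), (y : H)⟫ = ⟪(x : H), S y⟫)
    (z : ℂ) (hz : z.re = 0) (hz1 : ‖z‖ = 1) :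
    IsClosed (LinearMap.range (S.toFun + z • S.domain.subtype) : Set H) := by
  set L : S.domain →ₗ[ℂ] H := S.toFun + z • S.domain.subtype with hL
  have hLx : ∀ x : S.domain, L x = (S x : H) + z • (x : H) := fun x => rfl
  have hest : ∀ x : S.domain, ‖(x : H)‖ ≤ ‖L x‖ ∧ ‖(S x : H)‖ ≤ ‖L x‖ := by
    intro x
    have h := norm_sq_add_smul S hsymm z hz hz1 x
    rw [← hLx x] at h
    constructor
    · nlinarith [norm_nonneg (L x), norm_nonneg ((x : H)), norm_nonneg ((S x : H))]
    · nlinarith [norm_nonneg (L x), norm_nonneg ((x : H)), norm_nonneg ((S x : H))]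
  rw [← isSeqClosed_iff_isClosed]
  intro u w hu hw
  choose x hx using hu
  have hcau : CauchySeq u := hw.cauchySeq
  have hxc : CauchySeq (fun n => ((x n : H))) := by
    rw [Metric.cauchySeq_iff] at hcau ⊢
    intro ε hε
    obtain ⟨N, hN⟩ := hcau ε hε
    refine ⟨N, fun m hm n hn => ?_⟩
    have h2 := hN m hm n hn
    rw [dist_eq_norm] at h2 ⊢
    calc ‖((x m : H)) - ((x n : H))‖ ≤ ‖L (x m - x n)‖ := by
          have := (hest (x m - x n)).1
          simpa using this
      _ = ‖u m - u n‖ := by rw [map_sub L, hx m, hx n]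
      _ < ε := h2
  have hSxc : CauchySeq (fun n => ((S (x n) : H))) := by
    rw [Metric.cauchySeq_iff] at hcau ⊢
    intro ε hε
    obtain ⟨N, hN⟩ := hcau ε hε
    refine ⟨N, fun m hm n hn => ?_⟩
    have h2 := hN m hm n hn
    rw [dist_eq_norm] at h2 ⊢
    calc ‖((S (x m) : H)) - ((S (x n) : H))‖ = ‖(S (x m - x n) : H)‖ := by
          rw [S.map_sub]
      _ ≤ ‖L (x m - x n)‖ := (hest (x m - x n)).2
      _ = ‖u m - u n‖ := by rw [map_sub L, hx m, hx n]
      _ < ε := h2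
  obtain ⟨a, ha⟩ := cauchySeq_tendsto_of_complete hxc
  obtain ⟨b, hb⟩ := cauchySeq_tendsto_of_complete hSxc
  have hgraph : (a, b) ∈ S.graph := by
    have hmemn : ∀ n, (((x n : H)), ((S (x n) : H))) ∈ S.graph := fun n => S.mem_graph (x n)
    have ht : Filter.Tendsto (fun n => (((x n : H)), ((S (x n) : H)))) Filter.atTop
        (nhds (a, b)) := ha.prodMk_nhds hb
    exact hSc.mem_of_tendsto ht (Filter.Eventually.of_forall hmemn)
  rw [LinearPMap.mem_graph_iff] at hgraph
  obtain ⟨a', ha'1, hb'⟩ := hgraph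
  have ha'1' : (a' : H) = a := ha'1
  have hb'' : (S a' : H) = b := hb'
  refine ⟨a', ?_⟩
  have hwu : Filter.Tendsto u Filter.atTop (nhds (b + z • a)) := by
    have ht : Filter.Tendsto (fun n => ((S (x n) : H)) + z • ((x n : H))) Filter.atTop
        (nhds (b + z • a)) := hb.add (ha.const_smul z)
    convert ht using 1
    funext n
    rw [← hx n]
    rfl
  have hwb : w = b + z • a := tendsto_nhds_unique hw hwu
  rw [hLx a', hb'', ha'1', hwb]

theorem selfadjoint_closure_of_def
    (hd : Dense (T.domain : Set H))
    (hsymm : T.IsFormalAdjoint T)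
    (hp : ∀ y : T.adjoint.domain, (T.adjoint y : H) = Complex.I • (y : H) → (y : H) = 0)
    (hm : ∀ y : T.adjoint.domain, (T.adjoint y : H) = (-Complex.I) • (y : H) → (y : H) = 0) :
    T.closure.adjoint = T.closure := by
  have hTle : T ≤ T.adjoint := hsymm.le_adjoint hd
  have hadjC : T.adjoint.IsClosed := adjoint_isClosed T hd
  have hcl : T.IsClosable := hadjC.isClosable.leIsClosable hTle
  have hd' : Dense (T.closure.domain : Set H) := closure_dense_domain hd
  have hadj_eq : T.closure.adjoint = T.adjoint := closure_adjoint_eq hd hcl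
  set S := T.closure with hS
  have hScl : S.IsClosed := hcl.closure_isClosed
  have hSle : S ≤ T.adjoint := by
    have h1 : T.closure ≤ T.adjoint.closure := hadjC.isClosable.closure_mono hTle
    have h2 : T.adjoint.closure = T.adjoint := by
      apply LinearPMap.eq_of_eq_graph
      rw [← hadjC.isClosable.graph_closure_eq_closure_graph]
      exact hadjC.submodule_topologicalClosure_eq
    rwa [h2] at h1
  have hSsymm : ∀ x y : S.domain, ⟪(S x : H), (y : H)⟫ = ⟪(x : H), S y⟫ :=
    closure_symm hcl hsymm
  -- range is all of H
  have hrange : ∀ z : ℂ, z.re = 0 → ‖z‖ = 1 →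
      (∀ y : T.adjoint.domain,
        (T.adjoint y : H) = (-(starRingEnd ℂ) z) • (y : H) → (y : H) = 0) →
      LinearMap.range (S.toFun + z • S.domain.subtype) = ⊤ := by
    intro z hz hz1 hker
    set R := LinearMap.range (S.toFun + z • S.domain.subtype) with hR
    have hRc : IsClosed (R : Set H) := range_closed S hScl hSsymm z hz hz1
    have hRtc : R.topologicalClosure = R := SetLike.ext' (by
      rw [Submodule.topologicalClosure_coe]; exact hRc.closure_eq)
    haveI : R.HasOrthogonalProjection := by
      rw [← hRtc]; infer_instance
    rw [← Submodule.orthogonal_eq_bot_iff, Submodule.eq_bot_iff]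
    intro y hy
    have hyo : ∀ x : S.domain, ⟪(S x : H) + z • (x : H), y⟫ = 0 := by
      intro x
      exact (Submodule.mem_orthogonal R y).mp hy _ ⟨x, rfl⟩
    have hyi : ∀ x : S.domain, ⟪((-(starRingEnd ℂ) z) • y : H), (x : H)⟫ = ⟪y, S x⟫ := by
      intro x
      have h0 := hyo x
      rw [inner_add_left, inner_smul_left] at h0
      have h1 : ⟪y, (S x : H)⟫ + z * ⟪y, (x : H)⟫ = 0 := by
        have h2 := congrArg conj h0
        simpa [inner_conj_symm, mul_comm] using h2
      have hconj : (starRingEnd ℂ) (-(starRingEnd ℂ) z) = -z := by simp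
      rw [inner_smul_left, hconj]
      linear_combination -h1
    have hyd' : y ∈ S.adjoint.domain :=
      LinearPMap.mem_adjoint_domain_of_exists (T := S) y
        ⟨(-(starRingEnd ℂ) z) • y, fun x => hyi x⟩
    have hval : (S.adjoint ⟨y, hyd'⟩ : H) = (-(starRingEnd ℂ) z) • y :=
      LinearPMap.adjoint_apply_eq hd' ⟨y, hyd'⟩ (fun x => hyi x)
    have hdom : S.adjoint.domain = T.adjoint.domain := by rw [hadj_eq]
    have hyd : y ∈ T.adjoint.domain := hdom ▸ hyd'
    have hvalT : (T.adjoint ⟨y, hyd⟩ : H) = (-(starRingEnd ℂ) z) • y := by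
      rw [← hval]
      have hle1 : S.adjoint ≤ T.adjoint := le_of_eq hadj_eq
      have hcoe : ((⟨y, hyd'⟩ : S.adjoint.domain) : H) = ((⟨y, hyd⟩ : T.adjoint.domain) : H) := rfl
      exact (hle1.2 hcoe).symm
    exact hker ⟨y, hyd⟩ hvalT
  have hrp : LinearMap.range (S.toFun + Complex.I • S.domain.subtype) = ⊤ := by
    refine hrange Complex.I (by simp) (by simp) ?_
    intro y hy
    refine hp y ?_
    rwa [Complex.conj_I, neg_neg] at hy
  have key : ∀ y : T.adjoint.domain, ∃ x : S.domain, (x : H) = (y : H) ∧ S x = T.adjoint y := by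
    intro y
    have hmemr : ((T.adjoint y : H) + Complex.I • (y : H)) ∈
        LinearMap.range (S.toFun + Complex.I • S.domain.subtype) := by
      rw [hrp]; trivial
    obtain ⟨x, hx⟩ := hmemr
    have hx' : (S x : H) + Complex.I • (x : H) = (T.adjoint y : H) + Complex.I • (y : H) := hx
    have hxd : (x : H) ∈ T.adjoint.domain := hSle.1 x.2
    have hxval : T.adjoint ⟨(x : H), hxd⟩ = S x := (hSle.2 rfl).symm
    set u : T.adjoint.domain := y - ⟨(x : H), hxd⟩ with hu_def
    have hSx : (S x : H) = ((T.adjoint y : H) + Complex.I • (y : H)) - Complex.I • (x : H) :=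
      eq_sub_of_add_eq hx'
    have hu : (T.adjoint u : H) = (-Complex.I) • (u : H) := by
      rw [hu_def, T.adjoint.map_sub, hxval]
      have hucoe : ((y - ⟨(x : H), hxd⟩ : T.adjoint.domain) : H) = (y : H) - (x : H) := rfl
      rw [hucoe, hSx]
      module
    have hu0 := hm u hu
    have hyx : (y : H) = (x : H) := by
      have hucoe : ((u : T.adjoint.domain) : H) = (y : H) - (x : H) := rfl
      rw [hucoe] at hu0
      exact sub_eq_zero.mp hu0
    refine ⟨x, hyx.symm, ?_⟩
    apply add_right_cancel (b := Complex.I • (x : H))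
    calc (S x : H) + Complex.I • (x : H)
        = (T.adjoint y : H) + Complex.I • (y : H) := hx'
      _ = (T.adjoint y : H) + Complex.I • (x : H) := by rw [hyx]
  have hfinal : T.adjoint ≤ S := by
    refine ⟨fun a ha => ?_, fun a a' haa' => ?_⟩
    · obtain ⟨x, hx1, _⟩ := key ⟨a, ha⟩
      have hx1' : (x : H) = a := hx1
      exact hx1' ▸ x.2
    · obtain ⟨x, hx1, hx2⟩ := key a
      have hxa' : x = a' := Subtype.ext (by rw [hx1, haa'])
      rw [← hx2, hxa']
  rw [hadj_eq]
  exact le_antisymm hfinal hSle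


end VN


section LpFacts

set_option linter.unusedSectionVars false

local notation "⟪" x ", " y "⟫" => @inner ℂ _ _ x y

theorem single_mem_Cc {V : Type*} [DecidableEq V] (x : V) (a : ℂ) : lp.single 2 x a ∈ Cc V := by
  show {w | (lp.single 2 x a : ∀ _ : V, ℂ) w ≠ 0}.Finite
  refine Set.Finite.subset (Set.finite_singleton x) ?_
  intro w hw
  simp only [Set.mem_setOf_eq] at hw
  by_contra hwx
  simp only [Set.mem_singleton_iff] at hwx
  exact hw (lp.single_apply_ne (E := fun _ : V => ℂ) 2 x a hwx)

theorem cc_dense (V : Type*) : Dense ((Cc V : Submodule ℂ (L2 V)) : Set (L2 V)) := by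
  haveI := Classical.decEq V
  intro f
  have hs := lp.hasSum_single (E := fun _ : V => ℂ) (p := 2) (by norm_num) f
  refine mem_closure_of_tendsto hs ?_
  refine Filter.Eventually.of_forall fun s => ?_
  exact Submodule.sum_mem _ fun i _ => single_mem_Cc i (f i)

theorem inner_eq_sum_of_support {V : Type*} (f g : L2 V) (s : Finset V)
    (hf : ∀ x ∉ s, (f : ∀ _ : V, ℂ) x = 0) :
    ⟪f, g⟫ = ∑ x ∈ s, (starRingEnd ℂ) ((f : ∀ _ : V, ℂ) x) * (g : ∀ _ : V, ℂ) x := by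
  rw [lp.inner_eq_tsum]
  rw [tsum_eq_sum (s := s) (fun x hx => by rw [RCLike.inner_apply, hf x hx]; simp)]
  exact Finset.sum_congr rfl fun x _ => by rw [RCLike.inner_apply]; ring

end LpFacts

section LpFacts2

set_option linter.unusedSectionVars false
set_option maxHeartbeats 1000000

local notation "⟪" x ", " y "⟫" => @inner ℂ _ _ x y

theorem adjOp_coe {V : Type*} (G : SimpleGraph V) (hG : G.LocallyFinite)
    (f : (adjOp G hG).domain) (x : V) :
    ((adjOp G hG f : L2 V) : ∀ _ : V, ℂ) x
      = ∑ y ∈ @SimpleGraph.neighborFinset V G x (hG x), ((f : L2 V) : ∀ _ : V, ℂ) y := rfl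

theorem adjOp_symm {V : Type*} (G : SimpleGraph V) (hG : G.LocallyFinite) :
    (adjOp G hG).IsFormalAdjoint (adjOp G hG) := by
  classical
  intro f g
  set F : V → ℂ := ((f : L2 V) : ∀ _ : V, ℂ) with hF
  set Gg : V → ℂ := ((g : L2 V) : ∀ _ : V, ℂ) with hGg
  have hf : {x | F x ≠ 0}.Finite := f.2
  have hg : {x | Gg x ≠ 0}.Finite := g.2
  set s : Finset V := (hf.toFinset ∪ hg.toFinset) ∪
    (hf.toFinset ∪ hg.toFinset).biUnion (fun v => @SimpleGraph.neighborFinset V G v (hG v)) with hs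
  have hFs : ∀ x ∉ s, F x = 0 := by
    intro x hx
    by_contra hc
    exact hx (Finset.mem_union_left _ (Finset.mem_union_left _ (hf.mem_toFinset.mpr hc)))
  have hGs : ∀ x ∉ s, Gg x = 0 := by
    intro x hx
    by_contra hc
    exact hx (Finset.mem_union_left _ (Finset.mem_union_right _ (hg.mem_toFinset.mpr hc)))
  have hnbr : ∀ x : V, ∀ w ∈ G.neighborFinset x, w ∉ s → F w = 0 ∧ Gg w = 0 := by
    intro x w _ hw
    exact ⟨hFs w hw, hGs w hw⟩
  -- supports of A f and A g are inside s
  have hAF : ∀ x ∉ s, ((adjOp G hG f : L2 V) : ∀ _ : V, ℂ) x = 0 := by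
    intro x hx
    rw [adjOp_coe]
    refine Finset.sum_eq_zero fun y hy => ?_
    by_contra hc
    have hyF : y ∈ hf.toFinset := hf.mem_toFinset.mpr hc
    have hxy : x ∈ @SimpleGraph.neighborFinset V G y (hG y) := by
      rw [SimpleGraph.mem_neighborFinset] at hy ⊢
      exact hy.symm
    exact hx (Finset.mem_union_right _ (Finset.mem_biUnion.mpr
      ⟨y, Finset.mem_union_left _ hyF, hxy⟩))
  have hAG : ∀ x ∉ s, ((adjOp G hG g : L2 V) : ∀ _ : V, ℂ) x = 0 := by
    intro x hx
    rw [adjOp_coe]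
    refine Finset.sum_eq_zero fun y hy => ?_
    by_contra hc
    have hyF : y ∈ hg.toFinset := hg.mem_toFinset.mpr hc
    have hxy : x ∈ @SimpleGraph.neighborFinset V G y (hG y) := by
      rw [SimpleGraph.mem_neighborFinset] at hy ⊢
      exact hy.symm
    exact hx (Finset.mem_union_right _ (Finset.mem_biUnion.mpr
      ⟨y, Finset.mem_union_right _ hyF, hxy⟩))
  -- key swap identity
  have key : ∀ F3 : V → V → ℂ,
      (∑ x ∈ s, ∑ y ∈ (@SimpleGraph.neighborFinset V G x (hG x)) ∩ s, F3 x y)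
        = ∑ x ∈ s, ∑ y ∈ s, if G.Adj x y then F3 x y else 0 := by
    intro F3
    refine Finset.sum_congr rfl fun x _ => ?_
    rw [Finset.inter_comm, ← Finset.sum_ite_mem s (@SimpleGraph.neighborFinset V G x (hG x)) (F3 x)]
    refine Finset.sum_congr rfl fun y _ => ?_
    congr 1
    simp [SimpleGraph.mem_neighborFinset]
  have swap : (∑ x ∈ s, ∑ y ∈ (@SimpleGraph.neighborFinset V G x (hG x)) ∩ s, (starRingEnd ℂ) (F y) * Gg x)
      = ∑ x ∈ s, ∑ y ∈ (@SimpleGraph.neighborFinset V G x (hG x)) ∩ s, (starRingEnd ℂ) (F x) * Gg y := by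
    rw [key, key]
    rw [Finset.sum_comm]
    refine Finset.sum_congr rfl fun y _ => Finset.sum_congr rfl fun x _ => ?_
    by_cases h : G.Adj x y
    · rw [if_pos h, if_pos (h.symm)]
    · rw [if_neg h, if_neg (fun hc => h hc.symm)]
  calc ⟪(adjOp G hG f : L2 V), (g : L2 V)⟫
      = ∑ x ∈ s, (starRingEnd ℂ) (((adjOp G hG f : L2 V) : ∀ _ : V, ℂ) x) * Gg x :=
        inner_eq_sum_of_support _ _ s hAF
    _ = ∑ x ∈ s, ∑ y ∈ (@SimpleGraph.neighborFinset V G x (hG x)) ∩ s, (starRingEnd ℂ) (F y) * Gg x := by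
        refine Finset.sum_congr rfl fun x _ => ?_
        rw [adjOp_coe, map_sum, Finset.sum_mul]
        refine (Finset.sum_subset (Finset.inter_subset_left) fun w hw hw2 => ?_).symm
        have hws : w ∉ s := fun hws => hw2 (Finset.mem_inter.mpr ⟨hw, hws⟩)
        have hz : F w = 0 := hFs w hws
        rw [hF] at hz
        rw [hz]
        simp
    _ = ∑ x ∈ s, ∑ y ∈ (@SimpleGraph.neighborFinset V G x (hG x)) ∩ s, (starRingEnd ℂ) (F x) * Gg y := swap
    _ = ∑ x ∈ s, (starRingEnd ℂ) (F x) * (((adjOp G hG g : L2 V) : ∀ _ : V, ℂ) x) := by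
        refine Finset.sum_congr rfl fun x _ => ?_
        rw [adjOp_coe, Finset.mul_sum]
        refine Finset.sum_subset (Finset.inter_subset_left) fun w hw hw2 => ?_
        have hws : w ∉ s := fun hws => hw2 (Finset.mem_inter.mpr ⟨hw, hws⟩)
        rw [hGs w hws]
        simp
    _ = ⟪(f : L2 V), (adjOp G hG g : L2 V)⟫ := (inner_eq_sum_of_support _ _ s hFs).symm

theorem adjOp_adjoint_apply {V : Type*} (G : SimpleGraph V) (hG : G.LocallyFinite)
    (y : (adjOp G hG).adjoint.domain) (x : V) :
    (((adjOp G hG).adjoint y : L2 V) : ∀ _ : V, ℂ) x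
      = ∑ w ∈ @SimpleGraph.neighborFinset V G x (hG x), ((y : L2 V) : ∀ _ : V, ℂ) w := by
  classical
  have hd : Dense (((adjOp G hG).domain : Submodule ℂ (L2 V)) : Set (L2 V)) := cc_dense V
  set δ : (adjOp G hG).domain := ⟨lp.single 2 x 1, single_mem_Cc x 1⟩ with hδ
  have h := LinearPMap.adjoint_isFormalAdjoint hd y δ
  have hsingle : ∀ u : V, ((lp.single 2 x (1:ℂ) : L2 V) : ∀ _ : V, ℂ) u
      = if u = x then 1 else 0 := by
    intro u
    by_cases hu : u = x
    · subst hu; rw [if_pos rfl]; exact lp.single_apply_self (E := fun _ : V => ℂ) 2 u 1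
    · rw [if_neg hu]; exact lp.single_apply_ne (E := fun _ : V => ℂ) 2 x 1 hu
  have hAδ : ∀ w : V, ((adjOp G hG δ : L2 V) : ∀ _ : V, ℂ) w
      = if w ∈ @SimpleGraph.neighborFinset V G x (hG x) then 1 else 0 := by
    intro w
    have hcongr : ∑ u ∈ @SimpleGraph.neighborFinset V G w (hG w), ((δ : L2 V) : ∀ _ : V, ℂ) u
        = ∑ u ∈ @SimpleGraph.neighborFinset V G w (hG w), (if u = x then (1:ℂ) else 0) :=
      Finset.sum_congr rfl (fun u _ => hsingle u)
    rw [adjOp_coe, hcongr,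
      Finset.sum_ite_eq' (@SimpleGraph.neighborFinset V G w (hG w)) x (fun _ => (1:ℂ))]
    congr 1
    simp only [SimpleGraph.mem_neighborFinset]
    rw [SimpleGraph.adj_comm]
  -- LHS of h
  have hLHS : ⟪((adjOp G hG).adjoint y : L2 V), (δ : L2 V)⟫
      = (starRingEnd ℂ) ((((adjOp G hG).adjoint y : L2 V) : ∀ _ : V, ℂ) x) := by
    rw [hδ]
    have := lp.inner_single_right (𝕜 := ℂ) (G := fun _ : V => ℂ) x (1:ℂ)
      ((adjOp G hG).adjoint y)
    rw [this]
    simp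
  have hRHS : ⟪(y : L2 V), (adjOp G hG δ : L2 V)⟫
      = ∑ w ∈ @SimpleGraph.neighborFinset V G x (hG x),
          (starRingEnd ℂ) (((y : L2 V) : ∀ _ : V, ℂ) w) := by
    rw [lp.inner_eq_tsum]
    rw [tsum_eq_sum (s := @SimpleGraph.neighborFinset V G x (hG x)) (fun w hw => by
      rw [RCLike.inner_apply, hAδ w, if_neg hw, zero_mul])]
    refine Finset.sum_congr rfl fun w hw => ?_
    rw [RCLike.inner_apply, hAδ w, if_pos hw, one_mul]
  rw [hLHS, hRHS] at h
  have h2 := congrArg (starRingEnd ℂ) h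
  rw [Complex.conj_conj, map_sum] at h2
  simpa [Complex.conj_conj] using h2

end LpFacts2

section Kernel

set_option linter.unusedSectionVars false
set_option maxHeartbeats 2000000

theorem sphere_zero {V : Type*} (G : SimpleGraph V) (v : V) (hc : G.Connected) :
    sphere G v 0 = {v} := by
  ext w
  simp only [sphere, Set.mem_setOf_eq, Set.mem_singleton_iff]
  rw [hc.dist_eq_zero_iff]
  exact eq_comm

theorem root_nbr {V : Type*} (G : SimpleGraph V) (v : V) (hAT : IsAntitree G v) :
    G.neighborSet v = sphere G v 1 := by
  have hc := hAT.1
  ext u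
  simp only [SimpleGraph.mem_neighborSet, sphere, Set.mem_setOf_eq]
  constructor
  · intro hu
    exact SimpleGraph.dist_eq_one_iff_adj.mpr hu
  · intro hu
    have hune : u ≠ v := by
      intro h
      subst h
      rw [SimpleGraph.dist_self] at hu
      omega
    have hns := hAT.2 u hune
    have hdist : G.dist v u = 1 := hu
    rw [hdist] at hns
    have hv : v ∈ G.neighborSet u := by
      rw [hns]
      left
      show G.dist v v = 1 - 1
      simp [SimpleGraph.dist_self]
    exact (SimpleGraph.mem_neighborSet G u v).mp hv |>.symm

theorem antitree_kernel {V : Type} [Countable V]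
    (G : SimpleGraph V) (hG : G.LocallyFinite) (v : V) (hAT : IsAntitree G v)
    (α : ℝ) (hα0 : 0 < α) (hα1 : α ≤ 1)
    (h0 : (sphere G v 0).ncard = 1)
    (hs : ∀ n : ℕ, 1 ≤ n → (sphere G v n).ncard = ⌊(n : ℝ) ^ α⌋₊)
    (z : ℂ) (hz : z = Complex.I ∨ z = -Complex.I)
    (g : L2 V)
    (heq : ∀ x : V, (∑ w ∈ @SimpleGraph.neighborFinset V G x (hG x), (g : ∀ _ : V, ℂ) w)
      = z * (g : ∀ _ : V, ℂ) x) :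
    g = 0 := by
  classical
  by_contra hg0
  have hc := hAT.1
  -- basic facts about z
  have hzre : z.re = 0 := by rcases hz with h | h <;> subst h <;> simp
  have hzim : z.im = 1 ∨ z.im = -1 := by rcases hz with h | h <;> subst h <;> simp
  have hzsq : z.im * z.im = 1 := by rcases hzim with h | h <;> rw [h] <;> norm_num
  have hznz : z ≠ 0 := by
    rcases hz with h | h <;> subst h <;> simp [Complex.I_ne_zero]
  -- sphere sizes
  have hS0 : sphere G v 0 = {v} := sphere_zero G v hc
  have hsize1 : ∀ n : ℕ, 1 ≤ (sphere G v n).ncard := by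
    intro n
    rcases Nat.eq_zero_or_pos n with h | h
    · rw [h, h0]
    · rw [hs n h]
      apply Nat.le_floor
      have h1 : (1 : ℝ) ≤ (n : ℝ) := by exact_mod_cast h
      have h2 := Real.one_le_rpow h1 (le_of_lt hα0)
      push_cast
      linarith
  have hfin : ∀ n : ℕ, (sphere G v n).Finite := by
    intro n
    by_contra h
    have h2 : (sphere G v n).ncard = 0 := Set.Infinite.ncard h
    have := hsize1 n
    omega
  set s : ℕ → ℕ := fun n => (sphere G v n).ncard with hs_def
  set Fn : ℕ → Finset V := fun n => (hfin n).toFinset with hFn_def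
  have hcard : ∀ n, (Fn n).card = s n := fun n =>
    (Set.ncard_eq_toFinset_card _ (hfin n)).symm
  have hmemFn : ∀ n x, x ∈ Fn n ↔ G.dist v x = n := by
    intro n x
    rw [hFn_def]
    exact (hfin n).mem_toFinset
  have hsle : ∀ n : ℕ, 1 ≤ n → s n ≤ n := by
    intro n hn
    rw [hs_def]
    simp only
    rw [hs n hn]
    have h1 : (n : ℝ) ^ α ≤ (n : ℝ) := by
      have h2 : (n : ℝ) ^ α ≤ (n : ℝ) ^ (1 : ℝ) :=
        Real.rpow_le_rpow_of_exponent_le (by exact_mod_cast hn) hα1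
      rwa [Real.rpow_one] at h2
    calc ⌊(n : ℝ) ^ α⌋₊ ≤ ⌊(n : ℝ)⌋₊ := Nat.floor_le_floor h1
      _ = n := Nat.floor_natCast n
  -- neighbor finsets
  have hnbr0 : @SimpleGraph.neighborFinset V G v (hG v) = Fn 1 := by
    apply Finset.coe_injective
    rw [SimpleGraph.neighborFinset_def, Set.coe_toFinset, hFn_def]
    rw [Set.Finite.coe_toFinset]
    exact root_nbr G v hAT
  have hnbrn : ∀ (x : V) (n : ℕ), G.dist v x = n → 1 ≤ n →
      @SimpleGraph.neighborFinset V G x (hG x) = Fn (n - 1) ∪ Fn (n + 1) := by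
    intro x n hx hn
    apply Finset.coe_injective
    rw [SimpleGraph.neighborFinset_def, Set.coe_toFinset, Finset.coe_union, hFn_def]
    rw [Set.Finite.coe_toFinset, Set.Finite.coe_toFinset]
    have hxv : x ≠ v := by
      intro h
      subst h
      rw [SimpleGraph.dist_self] at hx
      omega
    have := hAT.2 x hxv
    rwa [hx] at this
  -- the sphere sums
  set t : ℕ → ℂ := fun n => ∑ x ∈ Fn n, (g : ∀ _ : V, ℂ) x with ht_def
  have hFdisj : ∀ m n : ℕ, m ≠ n → Disjoint (Fn m) (Fn n) := by
    intro m n hmn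
    rw [Finset.disjoint_left]
    intro a ha ha'
    rw [hmemFn] at ha ha'
    exact hmn (ha ▸ ha')
  have hvFn0 : ∀ x, x ∈ Fn 0 ↔ x = v := by
    intro x
    rw [hmemFn, hc.dist_eq_zero_iff]
    exact comm
  -- equation at root
  have hbase : t 1 = z * (g : ∀ _ : V, ℂ) v := by
    have := heq v
    rwa [hnbr0] at this
  -- equation at level n ≥ 1
  have hlevel : ∀ (x : V) (n : ℕ), G.dist v x = n → 1 ≤ n →
      t (n - 1) + t (n + 1) = z * (g : ∀ _ : V, ℂ) x := by
    intro x n hx hn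
    have h1 := heq x
    rw [hnbrn x n hx hn] at h1
    rw [Finset.sum_union (hFdisj _ _ (by omega))] at h1
    exact h1
  -- constancy on spheres
  have hconst : ∀ (n : ℕ) (x x' : V), G.dist v x = n → G.dist v x' = n →
      (g : ∀ _ : V, ℂ) x = (g : ∀ _ : V, ℂ) x' := by
    intro n x x' hx hx'
    rcases Nat.eq_zero_or_pos n with h | h
    · subst h
      rw [hc.dist_eq_zero_iff] at hx hx'
      rw [← hx, ← hx']
    · have h1 := hlevel x n hx h
      have h2 := hlevel x' n hx' h
      exact mul_left_cancel₀ hznz (h1.symm.trans h2)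
  -- representatives
  have hne : ∀ n : ℕ, ∃ x : V, G.dist v x = n := by
    intro n
    obtain ⟨x, hx⟩ := Set.nonempty_of_ncard_ne_zero (s := sphere G v n) (by
      have := hsize1 n; omega)
    exact ⟨x, hx⟩
  set u : ℕ → ℂ := fun n => (g : ∀ _ : V, ℂ) ((hne n).choose) with hu_def
  have hgu : ∀ x : V, (g : ∀ _ : V, ℂ) x = u (G.dist v x) := by
    intro x
    exact hconst (G.dist v x) x ((hne (G.dist v x)).choose) rfl
      (hne (G.dist v x)).choose_spec
  have hu0 : u 0 = (g : ∀ _ : V, ℂ) v := by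
    rw [hu_def]
    exact hconst 0 _ v (hne 0).choose_spec SimpleGraph.dist_self
  have htu : ∀ n, t n = (s n : ℂ) * u n := by
    intro n
    have hcongr : ∑ x ∈ Fn n, (g : ∀ _ : V, ℂ) x = ∑ _x ∈ Fn n, u n :=
      Finset.sum_congr rfl (fun x hx => by rw [hgu x, (hmemFn n x).mp hx])
    rw [ht_def]
    simp only
    rw [hcongr, Finset.sum_const, hcard n, nsmul_eq_mul]
  -- recurrence
  have hrec : ∀ n : ℕ, t n + t (n + 2) = z * u (n + 1) := by
    intro n
    have h1 := hlevel ((hne (n + 1)).choose) (n + 1) (hne (n + 1)).choose_spec (by omega)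
    simpa using h1
  have hbase' : t 1 = z * u 0 := by rw [hbase, hu0]
  -- the real sequence X
  set X : ℕ → ℝ := fun n => (s n : ℝ) * Complex.normSq (u n) with hX_def
  have hXnn : ∀ n, 0 ≤ X n := fun n =>
    mul_nonneg (Nat.cast_nonneg _) (Complex.normSq_nonneg _)
  -- summability of X
  have hgsq : Summable (fun x : V => ‖(g : ∀ _ : V, ℂ) x‖ ^ (2 : ℕ)) := by
    have h1 := lp.memℓp g
    rw [memℓp_gen_iff (by norm_num : 0 < (2 : ENNReal).toReal)] at h1
    have h2 : ∀ x : V, ‖(g : ∀ _ : V, ℂ) x‖ ^ ((2 : ENNReal).toReal) = ‖(g : ∀ _ : V, ℂ) x‖ ^ (2 : ℕ) := by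
      intro x
      rw [show ((2 : ENNReal).toReal) = ((2 : ℕ) : ℝ) by norm_num, Real.rpow_natCast]
    rwa [funext h2] at h1
  have hXeq : ∀ n, X n = ∑ x ∈ Fn n, ‖(g : ∀ _ : V, ℂ) x‖ ^ (2 : ℕ) := by
    intro n
    have hcongr : ∑ x ∈ Fn n, ‖(g : ∀ _ : V, ℂ) x‖ ^ (2:ℕ) = ∑ _x ∈ Fn n, ‖u n‖ ^ (2:ℕ) :=
      Finset.sum_congr rfl (fun x hx => by rw [hgu x, (hmemFn n x).mp hx])
    rw [hcongr, Finset.sum_const, hcard n, nsmul_eq_mul, hX_def]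
    simp [Complex.sq_norm]
  have hXsum : Summable X := by
    apply summable_of_sum_range_le hXnn (c := ∑' x : V, ‖(g : ∀ _ : V, ℂ) x‖ ^ (2 : ℕ))
    intro N
    rw [Finset.sum_congr rfl (fun n _ => hXeq n)]
    rw [← Finset.sum_biUnion (by
      intro m hm n hn hmn
      exact hFdisj m n hmn)]
    exact Summable.sum_le_tsum _ (fun x _ => by positivity) hgsq
  -- the quantity Q
  set Q : ℕ → ℝ := fun n => ((starRingEnd ℂ) (t n) * t (n + 1)).im with hQ_def
  have hs0 : s 0 = 1 := h0
  have hQid : ∀ n, Q n = z.im * ∑ k ∈ Finset.range (n + 1), X k := by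
    intro n
    induction n with
    | zero =>
      rw [hQ_def]
      simp only [Finset.range_one, Finset.sum_singleton, Nat.zero_add, zero_add]
      rw [hbase', htu 0, hs0]
      simp only [Nat.cast_one, one_mul]
      have hconj : (starRingEnd ℂ) (u 0) * (z * u 0) = z * (Complex.normSq (u 0) : ℂ) := by
        rw [show (starRingEnd ℂ) (u 0) * (z * u 0) = z * (u 0 * (starRingEnd ℂ) (u 0)) by ring,
          Complex.mul_conj]
      rw [hconj, hX_def]
      simp [Complex.mul_im, hs0]
    | succ n ih =>
      have ht2 : t (n + 2) = z * u (n + 1) - t n := by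
        have := hrec n
        linear_combination this
      rw [hQ_def]
      simp only
      rw [ht2, htu (n + 1)]
      have hexp : (starRingEnd ℂ) ((s (n+1) : ℂ) * u (n+1)) * (z * u (n+1) - t n)
          = z * ((s (n+1) : ℝ) * Complex.normSq (u (n+1)) : ℝ)
            - (starRingEnd ℂ) ((s (n+1) : ℂ) * u (n+1)) * t n := by
        rw [map_mul]
        push_cast
        rw [show (starRingEnd ℂ) ((s (n+1) : ℂ)) = (s (n+1) : ℂ) by
          rw [Complex.conj_natCast]]
        rw [show ((s (n+1) : ℂ)) * (starRingEnd ℂ) (u (n+1)) * (z * u (n+1) - t n)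
          = z * ((s (n+1) : ℂ) * (u (n+1) * (starRingEnd ℂ) (u (n+1))))
            - (s (n+1) : ℂ) * (starRingEnd ℂ) (u (n+1)) * t n by ring]
        rw [Complex.mul_conj]
      rw [hexp]
      rw [Complex.sub_im]
      have him1 : (z * ((s (n+1) : ℝ) * Complex.normSq (u (n+1)) : ℝ)).im
          = z.im * X (n + 1) := by
        rw [Complex.mul_im]
        simp [hX_def]
      have him2 : ((starRingEnd ℂ) ((s (n+1) : ℂ) * u (n+1)) * t n).im = - Q n := by
        rw [← htu (n + 1)]
        have hconjeq : (starRingEnd ℂ) (t (n+1)) * t n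
            = (starRingEnd ℂ) ((starRingEnd ℂ) (t n) * t (n+1)) := by
          rw [map_mul, Complex.conj_conj]
          ring
        rw [hconjeq, Complex.conj_im, hQ_def]
      rw [him1, him2]
      rw [Finset.sum_range_succ _ (n + 1), ih]
      ring
  -- g is nonzero somewhere
  have hex : ∃ x : V, (g : ∀ _ : V, ℂ) x ≠ 0 := by
    by_contra h
    push_neg at h
    apply hg0
    apply lp.ext
    funext x
    simpa using h x
  obtain ⟨x0, hx0⟩ := hex
  set n0 : ℕ := G.dist v x0 with hn0_def
  have hun0 : u n0 ≠ 0 := by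
    rw [hn0_def, ← hgu x0]
    exact hx0
  set c : ℝ := X n0 with hc_def
  have hcpos : 0 < c := by
    rw [hc_def, hX_def]
    apply mul_pos
    · have := hsize1 n0
      rw [hs_def]
      simp only
      exact_mod_cast Nat.lt_of_lt_of_le Nat.zero_lt_one this
    · exact Complex.normSq_pos.mpr hun0
  -- the key inequality
  have hkey : ∀ n : ℕ, n0 ≤ n → 1 ≤ n → 2 * c / ((n : ℝ) + 1) ≤ X n + X (n + 1) := by
    intro n hn0n h1n
    have hPc : c ≤ ∑ k ∈ Finset.range (n + 1), X k := by
      refine Finset.single_le_sum (fun k _ => hXnn k) ?_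
      rw [Finset.mem_range]
      omega
    have hQn : z.im * Q n = ∑ k ∈ Finset.range (n + 1), X k := by
      rw [hQid n, ← mul_assoc, hzsq, one_mul]
    have habs : z.im * Q n ≤ ‖t n‖ * ‖t (n + 1)‖ := by
      have h1 : z.im * Q n ≤ |Q n| := by
        rcases hzim with h | h
        · rw [h, one_mul]; exact le_abs_self _
        · rw [h, neg_one_mul]; exact neg_le_abs _
      have h2 : |Q n| ≤ ‖(starRingEnd ℂ) (t n) * t (n + 1)‖ :=
        Complex.abs_im_le_norm _
      rw [norm_mul, Complex.norm_conj] at h2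
      linarith
    have hcle : c ≤ ‖t n‖ * ‖t (n + 1)‖ := by
      calc c ≤ ∑ k ∈ Finset.range (n + 1), X k := hPc
        _ = z.im * Q n := hQn.symm
        _ ≤ _ := habs
    -- abs t = s * abs u
    have habst : ∀ m, ‖t m‖ = (s m : ℝ) * ‖u m‖ := by
      intro m
      rw [htu m, norm_mul, Complex.norm_natCast]
    rw [habst n, habst (n + 1)] at hcle
    -- squares
    have hXn : X n = (s n : ℝ) * ‖u n‖ ^ 2 := by
      rw [hX_def]; simp only; rw [Complex.sq_norm]
    have hXn1 : X (n + 1) = (s (n + 1) : ℝ) * ‖u (n + 1)‖ ^ 2 := by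
      rw [hX_def]; simp only; rw [Complex.sq_norm]
    have hsn : (s n : ℝ) ≤ (n : ℝ) + 1 := by
      have := hsle n h1n
      have : (s n : ℝ) ≤ (n : ℝ) := by exact_mod_cast this
      linarith
    have hsn1 : (s (n + 1) : ℝ) ≤ (n : ℝ) + 1 := by
      have := hsle (n + 1) (by omega)
      exact_mod_cast this
    have hsnn : (0 : ℝ) ≤ (s n : ℝ) := Nat.cast_nonneg _
    have hsn1n : (0 : ℝ) ≤ (s (n + 1) : ℝ) := Nat.cast_nonneg _
    have hann : (0 : ℝ) ≤ ‖u n‖ := norm_nonneg _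
    have hbnn : (0 : ℝ) ≤ ‖u (n + 1)‖ := norm_nonneg _
    have hnpos : (0 : ℝ) < (n : ℝ) + 1 := by positivity
    rw [div_le_iff₀ hnpos]
    set a : ℝ := ‖u n‖ with ha_def
    set b : ℝ := ‖u (n + 1)‖ with hb_def
    have e1 : 0 ≤ (((n : ℝ) + 1) - (s (n+1) : ℝ)) * ((s n : ℝ) * a ^ 2) :=
      mul_nonneg (by linarith) (by positivity)
    have e2 : 0 ≤ (((n : ℝ) + 1) - (s n : ℝ)) * ((s (n+1) : ℝ) * b ^ 2) :=
      mul_nonneg (by linarith) (by positivity)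
    have e3 : 0 ≤ (s n : ℝ) * (s (n+1) : ℝ) * (a - b) ^ 2 := by positivity
    rw [hXn, hXn1]
    nlinarith [hcle, e1, e2, e3]
  -- summability contradiction
  set m : ℕ := n0 + 1 with hm_def
  have hterm : ∀ k : ℕ, 2 * c / ((k : ℝ) + (m : ℝ) + 1) ≤ X (k + m) + X (k + m + 1) := by
    intro k
    have := hkey (k + m) (by omega) (by omega)
    have hcast : ((k + m : ℕ) : ℝ) + 1 = (k : ℝ) + (m : ℝ) + 1 := by push_cast; ring
    rwa [hcast] at this
  have hsum1 : Summable (fun k : ℕ => X (k + m) + X (k + m + 1)) := by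
    have h1 : Summable (fun k : ℕ => X (k + m)) := (summable_nat_add_iff m).mpr hXsum
    have h2 : Summable (fun k : ℕ => X (k + (m + 1))) := (summable_nat_add_iff (m + 1)).mpr hXsum
    exact h1.add h2
  have hsum2 : Summable (fun k : ℕ => 2 * c / ((k : ℝ) + (m : ℝ) + 1)) := by
    refine Summable.of_nonneg_of_le (fun k => by positivity) hterm hsum1
  have hsum3 : Summable (fun k : ℕ => 1 / ((k : ℝ) + (m : ℝ) + 1)) := by
    have h1 := hsum2.mul_left (1 / (2 * c))
    refine h1.congr fun k => ?_
    rw [← mul_div_assoc, one_div_mul_cancel (mul_pos two_pos hcpos).ne']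
  have hsum4 : Summable (fun k : ℕ => 1 / ((k + (m + 1) : ℕ) : ℝ)) := by
    convert hsum3 using 2 with k
    push_cast
    ring
  have hsum5 : Summable (fun n : ℕ => 1 / (n : ℝ)) := (summable_nat_add_iff (m + 1)).mp hsum4
  exact Real.not_summable_one_div_natCast hsum5

end Kernel

/-- The adjacency operator of the antitree with sphere sizes
`s₀ = 1`, `s_n = ⌊n^α⌋` for `0 < α ≤ 1` is essentially self-adjoint; equivalently its
deficiency indices vanish. -/
theorem antitree_essentially_selfadjoint {V : Type} [Countable V]
    (G : SimpleGraph V) (hG : G.LocallyFinite) (v : V) (hAT : IsAntitree G v)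
    (α : ℝ) (hα0 : 0 < α) (hα1 : α ≤ 1)
    (h0 : (sphere G v 0).ncard = 1)
    (hs : ∀ n : ℕ, 1 ≤ n → (sphere G v n).ncard = ⌊(n : ℝ) ^ α⌋₊) :
    EssSelfAdj (adjOp G hG) ∧ etaP (adjOp G hG) = 0 ∧ etaM (adjOp G hG) = 0 := by
  have hd : Dense (((adjOp G hG).domain : Submodule ℂ (L2 V)) : Set (L2 V)) := cc_dense V
  have hsymm := adjOp_symm G hG
  have hker : ∀ (z : ℂ), (z = Complex.I ∨ z = -Complex.I) →
      ∀ y : (adjOp G hG).adjoint.domain,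
        ((adjOp G hG).adjoint y : L2 V) = z • (y : L2 V) → (y : L2 V) = 0 := by
    intro z hzz y hy
    apply antitree_kernel G hG v hAT α hα0 hα1 h0 hs z hzz ((y : L2 V))
    intro x
    have h1 := adjOp_adjoint_apply G hG y x
    have h2 : (((adjOp G hG).adjoint y : L2 V) : ∀ _ : V, ℂ) x
        = z * ((y : L2 V) : ∀ _ : V, ℂ) x := by
      rw [hy, lp.coeFn_smul]
      simp
    rw [← h1, h2]
  refine ⟨?_, ?_, ?_⟩
  · exact selfadjoint_closure_of_def hd hsymm (fun y => hker Complex.I (Or.inl rfl) y)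
      (fun y => hker (-Complex.I) (Or.inr rfl) y)
  · rw [etaP, rank_eq_zero_iff]
    intro x
    refine ⟨1, one_ne_zero, ?_⟩
    rw [one_smul]
    have hx2 : ((adjOp G hG).adjoint.toFun
        - Complex.I • (adjOp G hG).adjoint.domain.subtype) x.1 = 0 := x.2
    rw [LinearMap.sub_apply, LinearMap.smul_apply, sub_eq_zero] at hx2
    have h3 : ((adjOp G hG).adjoint x.1 : L2 V) = Complex.I • ((x.1 : L2 V)) := hx2
    have h4 := hker Complex.I (Or.inl rfl) x.1 h3
    exact Subtype.ext (Subtype.ext h4)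
  · rw [etaM, rank_eq_zero_iff]
    intro x
    refine ⟨1, one_ne_zero, ?_⟩
    rw [one_smul]
    have hx2 : ((adjOp G hG).adjoint.toFun
        - (-Complex.I) • (adjOp G hG).adjoint.domain.subtype) x.1 = 0 := x.2
    rw [LinearMap.sub_apply, LinearMap.smul_apply, sub_eq_zero] at hx2
    have h3 : ((adjOp G hG).adjoint x.1 : L2 V) = (-Complex.I) • ((x.1 : L2 V)) := hx2
    have h4 := hker (-Complex.I) (Or.inr rfl) x.1 h3
    exact Subtype.ext (Subtype.ext h4)

end DefIdx
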